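/- Let G act faithfully by homeomorphisms on a Hausdorff space X, and let U be an open subset such that the G-orbit of U (the collection {gU : g ∈ G}) is a basis of the topology of X. Then every non-trivial normal subgroup of G contains R_U, the normal closure in G of the commutator subgroup of G_(U). -/

import Mathlib

/-- The subgroup of elements of `G` acting (via `φ`) trivially outside of `U`. -/
def fixingOutside {G X : Type*} [Group G] (φ : G →* Equiv.Perm X) (U : Set X) :
    Subgroup G where
  carrier := {g | ∀ x ∉ U, φ g x = x}
  one_mem' := by intro x _; simp
  mul_mem' := by
    intro a b ha hb x hx
    have h1 := hb x hx
    have h2 := ha x hx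
    simp only [map_mul, Equiv.Perm.mul_apply, h1, h2]
  inv_mem' := by
    intro a ha x hx
    simp only [map_inv]
    exact Equiv.injective (φ a) (by rw [show (φ a) ((φ a)⁻¹ x) = x from (φ a).apply_symm_apply x, ha x hx])

lemma mem_fixingOutside {G X : Type*} [Group G] (φ : G →* Equiv.Perm X) (U : Set X)
    (g : G) : g ∈ fixingOutside φ U ↔ ∀ x ∉ U, φ g x = x := Iff.rfl

lemma fixingOutside_apply_mem {G X : Type*} [Group G] {φ : G →* Equiv.Perm X}
    {U : Set X} {g : G} (hg : g ∈ fixingOutside φ U) {x : X} (hx : x ∈ U) :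
    φ g x ∈ U := by
  by_contra h
  have h1 : φ g (φ g x) = φ g x := hg (φ g x) h
  have h2 : φ g x = x := Equiv.injective (φ g) h1
  rw [h2] at h
  exact h hx

lemma commute_of_disjoint {G X : Type*} [Group G] {φ : G →* Equiv.Perm X}
    (hfaithful : Function.Injective φ) {V W : Set X} (hdisj : ∀ x ∈ V, x ∉ W)
    {a b : G} (ha : a ∈ fixingOutside φ V) (hb : b ∈ fixingOutside φ W) :
    a * b = b * a := by
  apply hfaithful
  ext x
  simp only [map_mul, Equiv.Perm.mul_apply]
  by_cases hxV : x ∈ V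
  · have hxW : x ∉ W := hdisj x hxV
    rw [hb x hxW]
    have : φ a x ∈ V := fixingOutside_apply_mem ha hxV
    rw [hb (φ a x) (hdisj _ this)]
  · by_cases hxW : x ∈ W
    · rw [ha x hxV]
      have : φ b x ∈ W := fixingOutside_apply_mem hb hxW
      by_cases h' : φ b x ∈ V
      · exact absurd this (hdisj _ h')
      · rw [ha (φ b x) h']
    · rw [hb x hxW, ha x hxV, hb x hxW]

lemma conj_mem_fixingOutside {G X : Type*} [Group G] {φ : G →* Equiv.Perm X}
    {U : Set X} {g : G} (hg : g ∈ fixingOutside φ U) (h : G) :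
    h * g * h⁻¹ ∈ fixingOutside φ (φ h '' U) := by
  intro x hx
  simp only [map_mul, map_inv, Equiv.Perm.mul_apply]
  have hnot : (φ h)⁻¹ x ∉ U := by
    intro hmem
    exact hx ⟨(φ h)⁻¹ x, hmem, (φ h).apply_symm_apply _⟩
  rw [hg _ hnot]; exact (φ h).apply_symm_apply x

open scoped commutatorElement

/-- Lemma 4.3 (Lemma `lem:Ru`): if the `G`-orbit of an open set `U` is a basis of the
topology of `X`, then every non-trivial normal subgroup of `G` contains `R_U`, the normal
closure in `G` of the commutator subgroup of `G_(U)`. -/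
theorem normalClosure_commutator_le_of_orbit_basis
    {G X : Type*} [Group G] [TopologicalSpace X] [T2Space X] [Infinite X]
    (φ : G →* Equiv.Perm X) (hfaithful : Function.Injective φ)
    (hcont : ∀ g : G, Continuous (φ g))
    (U : Set X) (hU : IsOpen U)
    (hbasis : TopologicalSpace.IsTopologicalBasis {V : Set X | ∃ g : G, V = (φ g) '' U})
    (N : Subgroup G) [N.Normal] (hN : N ≠ ⊥) :
    Subgroup.normalClosure
      ((⁅fixingOutside φ U, fixingOutside φ U⁆ : Subgroup G) : Set G) ≤ N := by
  -- get a nontrivial element of N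
  obtain ⟨⟨h, hhN⟩, hh1⟩ := Subgroup.ne_bot_iff_exists_ne_one.mp hN
  have hh1' : h ≠ 1 := by
    intro hc
    apply hh1
    ext
    exact hc
  -- a point moved by h
  have : ∃ x : X, φ h x ≠ x := by
    by_contra hc
    push_neg at hc
    apply hh1'
    apply hfaithful
    ext x
    simp [hc x]
  obtain ⟨x, hx⟩ := this
  -- Hausdorff separation
  obtain ⟨u, v, hu, hv, hhu, hxv, huv⟩ := t2_separation hx
  -- small open set around x moved off itself by h
  set V : Set X := v ∩ (φ h) ⁻¹' u with hVdef
  have hVopen : IsOpen V := hv.inter ((hcont h).isOpen_preimage u hu)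
  have hxV : x ∈ V := ⟨hxv, hhu⟩
  have hVmove : ∀ y ∈ V, φ h y ∉ V := by
    intro y hy hy2
    exact Set.disjoint_left.mp huv hy.2 hy2.1
  -- find a basis element W = φ g '' U inside V containing x
  obtain ⟨W, ⟨g, hWg⟩, hxW, hWV⟩ := hbasis.exists_subset_of_mem_open hxV hVopen
  -- W and its h-translate are disjoint
  have hdisj : ∀ y ∈ W, y ∉ φ h '' W := by
    rintro y hyW ⟨z, hzW, rfl⟩
    exact hVmove z (hWV hzW) (hWV hyW)
  -- every commutator of elements supported in W lies in N
  have key : ∀ a ∈ fixingOutside φ W, ∀ b ∈ fixingOutside φ W, ⁅a, b⁆ ∈ N := by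
    intro a ha b hb
    set d : G := h * b⁻¹ * h⁻¹ with hd
    have hdmem : d ∈ fixingOutside φ (φ h '' W) :=
      conj_mem_fixingOutside (inv_mem hb) h
    have hcomm : a * d = d * a := commute_of_disjoint hfaithful hdisj ha hdmem
    have hcomm' : d * a⁻¹ = a⁻¹ * d := by
      have := congrArg (fun t => a⁻¹ * t * a⁻¹) hcomm
      simpa [mul_assoc] using this
    have hbd : b * d ∈ N := by
      have h1 : b * h * b⁻¹ ∈ N := Subgroup.Normal.conj_mem ‹N.Normal› h hhN b
      have : (b * h * b⁻¹) * h⁻¹ ∈ N := mul_mem h1 (inv_mem hhN)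
      simpa [hd, mul_assoc] using this
    have heq : ⁅a, b⁆ = ⁅a, b * d⁆ := by
      have e1 : ⁅a, b * d⁆ = a * b * (d * a⁻¹) * d⁻¹ * b⁻¹ := by group
      rw [e1, hcomm']
      group
    rw [heq]
    have : (a * (b * d) * a⁻¹) * (b * d)⁻¹ ∈ N :=
      mul_mem (Subgroup.Normal.conj_mem ‹N.Normal› _ hbd a) (inv_mem hbd)
    simpa [commutatorElement_def, mul_assoc] using this
  -- transfer back to U via conjugation by g
  have hsub : (⁅fixingOutside φ U, fixingOutside φ U⁆ : Subgroup G) ≤ N := by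
    rw [Subgroup.commutator_le]
    intro p hp q hq
    have ha : g * p * g⁻¹ ∈ fixingOutside φ W := by
      rw [hWg]; exact conj_mem_fixingOutside hp g
    have hb : g * q * g⁻¹ ∈ fixingOutside φ W := by
      rw [hWg]; exact conj_mem_fixingOutside hq g
    have hc : ⁅g * p * g⁻¹, g * q * g⁻¹⁆ ∈ N := key _ ha _ hb
    have heq : ⁅p, q⁆ = g⁻¹ * ⁅g * p * g⁻¹, g * q * g⁻¹⁆ * g⁻¹⁻¹ := by group
    rw [heq]
    exact Subgroup.Normal.conj_mem ‹N.Normal› _ hc g⁻¹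
  exact Subgroup.normalClosure_le_normal hsub
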